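/- arXiv:1112.1346 — 2 statements merged into one kernel-verified Lean document; each statement's English description precedes it below -/
import Mathlib

section
/- Let (V,g) be an n-dimensional real inner product space and let ω₁, ω₂ be (p,q)-double forms on V. Then the inner product of ω₁ and ω₂ equals (1/p!) times the full contraction of the composition product of the transpose of one with the other: ⟨ω₁,ω₂⟩ = (1/p!)·c^p(ω₂^t ∘ ω₁) = (1/p!)·c^p(ω₁^t ∘ ω₂). -/
noncomputable section

open Finset

/-- Double forms over an `n`-dimensional real inner product space, described by their
coefficients in a fixed orthonormal basis: a `(p,q)`-double form corresponds to a function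
supported on pairs of subsets of cardinalities `p` and `q`. -/
abbrev DForm (n : ℕ) := Finset (Fin n) → Finset (Fin n) → ℝ

namespace DForm

variable {n : ℕ}

/-- Sign of the shuffle placing the elements of `A` (in increasing order) before
those of `B` (in increasing order). -/
def shuffleSign (A B : Finset (Fin n)) : ℝ :=
  (-1 : ℝ) ^ (∑ x ∈ B, (A.filter fun a => x < a).card)

/-- The exterior product of double forms. -/
def wedge (ω₁ ω₂ : DForm n) : DForm n := fun I J =>
  ∑ A ∈ I.powerset, ∑ B ∈ J.powerset,
    shuffleSign A (I \ A) * shuffleSign B (J \ B) * ω₁ A B * ω₂ (I \ A) (J \ B)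

/-- Exterior powers `ω^k` of a double form. -/
def dpow (ω : DForm n) : ℕ → DForm n
  | 0 => fun I J => if I = ∅ ∧ J = ∅ then 1 else 0
  | k + 1 => wedge ω (dpow ω k)

/-- The double Hodge star operator. -/
def hstar (ω : DForm n) : DForm n := fun I J =>
  shuffleSign Iᶜ I * shuffleSign Jᶜ J * ω Iᶜ Jᶜ

/-- The contraction `c` of double forms. -/
def contr (ω : DForm n) : DForm n := fun I J =>
  ∑ j : Fin n,
    if j ∈ I ∨ j ∈ J then 0
    else shuffleSign {j} I * shuffleSign {j} J * ω (insert j I) (insert j J)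

/-- Iterated contraction `c^k`. -/
def citer (ω : DForm n) : ℕ → DForm n
  | 0 => ω
  | k + 1 => contr (citer ω k)

/-- The inner product of double forms. -/
def dinner (ω₁ ω₂ : DForm n) : ℝ :=
  ∑ I : Finset (Fin n), ∑ J : Finset (Fin n), ω₁ I J * ω₂ I J

/-- The transpose `ω^t` of a double form. -/
def transp (ω : DForm n) : DForm n := fun I J => ω J I

/-- The composition (Greub) product `ω₁ ∘ ω₂` of double forms. -/
def comp (ω₁ ω₂ : DForm n) : DForm n := fun I J =>
  ∑ K : Finset (Fin n), ω₂ I K * ω₁ K J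

/-- The scalar value of a `(0,0)`-double form. -/
def toScalar (ω : DForm n) : ℝ := ω ∅ ∅

/-- The metric, as a `(1,1)`-double form. -/
def gMetric (n : ℕ) : DForm n := fun I J => if I = J ∧ I.card = 1 then 1 else 0

/-- Iterated composition power `ω^{∘r}` of a `(1,1)`-double form, with `ω^{∘0} = g`. -/
def cpow (ω : DForm n) : ℕ → DForm n
  | 0 => gMetric n
  | r + 1 => comp ω (cpow ω r)

/-- The `(1,1)`-double form associated to a bilinear form, given by its matrix in the
orthonormal basis. -/
def ofMatrix (h : Matrix (Fin n) (Fin n) ℝ) : DForm n := fun I J =>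
  ∑ i : Fin n, ∑ j : Fin n, if I = {i} ∧ J = {j} then h i j else 0

/-- `ω` is a `(p,q)`-double form. -/
def IsOfDeg (ω : DForm n) (p q : ℕ) : Prop :=
  ∀ I J : Finset (Fin n), ω I J ≠ 0 → I.card = p ∧ J.card = q

/-- `ω` is a symmetric double form. -/
def IsSym (ω : DForm n) : Prop := ∀ I J, ω I J = ω J I

/-- The sign relating `e_{v 0} ∧ ⋯ ∧ e_{v (p-1)}` to the corresponding increasing
basis `p`-vector (and `0` if the indices are not pairwise distinct). -/
def tupleSign {p : ℕ} (v : Fin p → Fin n) : ℝ :=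
  if Function.Injective v then (((Equiv.Perm.sign (Tuple.sort v)) : ℤ) : ℝ) else 0

/-- Evaluation of a double form on wedges of basis vectors indexed by arbitrary tuples. -/
def evalT (ω : DForm n) {p q : ℕ} (v : Fin p → Fin n) (w : Fin q → Fin n) : ℝ :=
  tupleSign v * tupleSign w * ω (Finset.image v Finset.univ) (Finset.image w Finset.univ)

/-- The first Bianchi identity for a `(2,2)`-double form:
`R(x∧y,z∧t) + R(y∧z,x∧t) + R(z∧x,y∧t) = 0`. -/
def Bianchi2 (R : DForm n) : Prop :=
  ∀ x y z t : Fin n,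
    evalT R ![x, y] ![z, t] + evalT R ![y, z] ![x, t] + evalT R ![z, x] ![y, t] = 0

/-- The first Bianchi identity for a `(p,p)`-double form. -/
def FirstBianchi (ω : DForm n) (p : ℕ) : Prop :=
  ∀ (x : Fin (p + 1) → Fin n) (y : Fin (p - 1) → Fin n),
    ∑ j : Fin (p + 1),
      (-1 : ℝ) ^ (j : ℕ) * evalT ω (x ∘ Fin.succAbove j) (Fin.cons (x j) y) = 0

/-- The characteristic coefficient `s_k(h)` of a bilinear form `h`, defined through the
characteristic polynomial: `det(h - λ g) = ∑ (-1)^(n-i) s_i(h) λ^(n-i)`. -/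
def sInv (h : Matrix (Fin n) (Fin n) ℝ) (k : ℕ) : ℝ :=
  (-1 : ℝ) ^ k * (Matrix.charpoly h).coeff (n - k)

/-- The `k`-th cofactor (Newton) transformation `t_k(h) = (1/(k!(n-1-k)!)) *(g^{n-1-k} h^k)`. -/
def tInv (h : Matrix (Fin n) (Fin n) ℝ) (k : ℕ) : DForm n :=
  ((k.factorial * (n - 1 - k).factorial : ℕ) : ℝ)⁻¹ •
    hstar (wedge (dpow (gMetric n) (n - 1 - k)) (dpow (ofMatrix h) k))

/-- The `(r,q)`-cofactor `s_{(r,q)}(h) = (1/(q!(n-q-r)!)) *(g^{n-q-r} h^q)`. -/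
def sCof (h : Matrix (Fin n) (Fin n) ℝ) (r q : ℕ) : DForm n :=
  ((q.factorial * (n - q - r).factorial : ℕ) : ℝ)⁻¹ •
    hstar (wedge (dpow (gMetric n) (n - q - r)) (dpow (ofMatrix h) q))

end DForm

namespace DForm
variable {n : ℕ}

lemma shuffleSign_mul_self (A B : Finset (Fin n)) :
    shuffleSign A B * shuffleSign A B = 1 := by
  unfold shuffleSign
  rw [← pow_add]
  exact Even.neg_one_pow ⟨_, rfl⟩

lemma isOfDeg_contr {η : DForm n} {p q : ℕ} (h : IsOfDeg η (p+1) (q+1)) :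
    IsOfDeg (contr η) p q := by
  intro I J hne
  unfold contr at hne
  obtain ⟨j, -, hj⟩ := Finset.exists_ne_zero_of_sum_ne_zero hne
  by_cases hmem : j ∈ I ∨ j ∈ J
  · simp [hmem] at hj
  rw [if_neg hmem] at hj
  push_neg at hmem
  have hη : η (insert j I) (insert j J) ≠ 0 := by
    intro h0; rw [h0, mul_zero] at hj; exact hj rfl
  have h2 := h _ _ hη
  rw [Finset.card_insert_of_notMem hmem.1, Finset.card_insert_of_notMem hmem.2] at h2
  exact ⟨by omega, by omega⟩

lemma pair_sum (f : Finset (Fin n) → ℝ) :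
    ∑ I : Finset (Fin n), ∑ j ∈ Iᶜ, f (insert j I)
      = ∑ I : Finset (Fin n), (I.card : ℝ) * f I := by
  have h1 : ∀ I : Finset (Fin n), (I.card : ℝ) * f I = ∑ _j ∈ I, f I := by
    intro I; rw [Finset.sum_const, nsmul_eq_mul]
  simp_rw [h1]
  rw [Finset.sum_sigma', Finset.sum_sigma']
  refine Finset.sum_nbij' (fun x => ⟨insert x.2 x.1, x.2⟩) (fun x => ⟨x.1.erase x.2, x.2⟩)
    ?_ ?_ ?_ ?_ ?_
  · rintro ⟨I, j⟩ hx
    simp only [Finset.mem_sigma, Finset.mem_univ, Finset.mem_compl, true_and] at hx ⊢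
    exact Finset.mem_insert_self _ _
  · rintro ⟨I, j⟩ hx
    simp only [Finset.mem_sigma, Finset.mem_univ, Finset.mem_compl, true_and] at hx ⊢
    exact Finset.notMem_erase _ _
  · rintro ⟨I, j⟩ hx
    simp only [Finset.mem_sigma, Finset.mem_univ, Finset.mem_compl, true_and] at hx
    simp [Finset.erase_insert_of_ne, Finset.erase_insert hx]
  · rintro ⟨I, j⟩ hx
    simp only [Finset.mem_sigma, Finset.mem_univ, true_and] at hx
    simp [Finset.insert_erase hx]
  · rintro ⟨I, j⟩ hx; rfl

lemma trace_contr (η : DForm n) :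
    ∑ I : Finset (Fin n), contr η I I = ∑ I : Finset (Fin n), (I.card : ℝ) * η I I := by
  rw [← pair_sum]
  apply Finset.sum_congr rfl
  intro I _
  unfold contr
  rw [Finset.sum_ite, Finset.sum_const_zero, zero_add]
  refine Finset.sum_congr (by ext j; simp) fun j hj => by
    rw [shuffleSign_mul_self, one_mul]

lemma citer_succ' (η : DForm n) (k : ℕ) : citer η (k+1) = citer (contr η) k := by
  induction k with
  | zero => rfl
  | succ k ih => show contr (citer η (k+1)) = _; rw [ih]; rfl

lemma key {p : ℕ} : ∀ (η : DForm n), IsOfDeg η p p →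
    citer η p ∅ ∅ = p.factorial * ∑ I : Finset (Fin n), η I I := by
  induction p with
  | zero =>
    intro η h
    show η ∅ ∅ = _
    rw [Nat.factorial_zero, Nat.cast_one, one_mul]
    rw [Finset.sum_eq_single ∅]
    · intro I _ hI
      by_contra h0
      have := (h I I h0).1
      exact hI (Finset.card_eq_zero.mp this)
    · intro h0; simp at h0
  | succ p ih =>
    intro η h
    rw [citer_succ', ih _ (isOfDeg_contr h), trace_contr]
    have h2 : ∑ I : Finset (Fin n), (I.card : ℝ) * η I I
        = (p + 1 : ℝ) * ∑ I : Finset (Fin n), η I I := by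
      rw [Finset.mul_sum]
      apply Finset.sum_congr rfl
      intro I _
      by_cases h0 : η I I = 0
      · simp [h0]
      · rw [(h I I h0).1]; push_cast; ring
    rw [h2, Nat.factorial_succ]; push_cast; ring


lemma key2 {p q : ℕ} (a b : DForm n) (ha : IsOfDeg a p q) (hb : IsOfDeg b p q) :
    dinner a b = ((p.factorial : ℝ))⁻¹ * toScalar (citer (comp (transp b) a) p) := by
  have hdeg : IsOfDeg (comp (transp b) a) p p := by
    intro I J hne
    obtain ⟨K, -, hK⟩ := Finset.exists_ne_zero_of_sum_ne_zero hne
    have h1 : a I K ≠ 0 := fun h => hK (by rw [h, zero_mul])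
    have h2 : b J K ≠ 0 := fun h => hK (by show a I K * b J K = 0; rw [h, mul_zero])
    exact ⟨(ha I K h1).1, (hb J K h2).1⟩
  unfold toScalar
  rw [key _ hdeg, ← mul_assoc, inv_mul_cancel₀ (by exact_mod_cast p.factorial_ne_zero), one_mul]
  rfl

lemma dinner_comm (a b : DForm n) : dinner a b = dinner b a := by
  unfold dinner
  exact Finset.sum_congr rfl fun I _ => Finset.sum_congr rfl fun J _ => mul_comm _ _

end DForm

open DForm in
/-- The inner product of two `(p,q)`-double forms is `(1/p!)` times the full contraction of
`ω₂ᵗ ∘ ω₁`, and also of `ω₁ᵗ ∘ ω₂`. -/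
theorem statement0 (n p q : ℕ) (ω₁ ω₂ : DForm n)
    (h₁ : IsOfDeg ω₁ p q) (h₂ : IsOfDeg ω₂ p q) :
    dinner ω₁ ω₂ = ((p.factorial : ℝ))⁻¹ * toScalar (citer (comp (transp ω₂) ω₁) p) ∧
    dinner ω₁ ω₂ = ((p.factorial : ℝ))⁻¹ * toScalar (citer (comp (transp ω₁) ω₂) p) := by
  exact ⟨key2 ω₁ ω₂ h₁ h₂, (dinner_comm ω₁ ω₂).trans (key2 ω₂ ω₁ h₂ h₁)⟩
end
end

section
/- For every bilinear form h on an n-dimensional real inner product space (V,g) and every 1 ≤ k ≤ n, the characteristic coefficient s_k(h) is given by s_k(h) = (1/(k!(n−k)!))·*(g^{n−k}h^k), where g^{n−k}h^k is the exterior product of double forms; equivalently, det(h−λg) = Σ_{i=0}^n (−1)^{n−i} ((1/(i!(n−i)!))·*(g^{n−i}h^i)) λ^{n−i} for all λ ∈ ℝ. -/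
noncomputable section

open Finset

namespace DForm
variable {n : ℕ}

lemma shuffleSign_empty_right (A : Finset (Fin n)) : shuffleSign A ∅ = 1 := by
  simp [shuffleSign]

lemma shuffleSign_singleton (i : Fin n) (B : Finset (Fin n)) :
    shuffleSign {i} B = (-1 : ℝ) ^ (B.filter (· < i)).card := by
  rw [shuffleSign]
  congr 1
  rw [Finset.card_filter]
  refine Finset.sum_congr rfl fun x hx => ?_
  by_cases hxi : x < i
  · simp [Finset.filter_singleton, hxi]
  · simp [Finset.filter_singleton, hxi]

lemma toScalar_hstar (ω : DForm n) : toScalar (hstar ω) = ω Finset.univ Finset.univ := by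
  simp [toScalar, hstar, shuffleSign_empty_right]

lemma ofMatrix_singleton (M : Matrix (Fin n) (Fin n) ℝ) (i j : Fin n) :
    ofMatrix M {i} {j} = M i j := by
  rw [ofMatrix]
  simp only [Finset.singleton_inj]
  rw [Finset.sum_eq_single i, Finset.sum_eq_single j]
  · simp
  · intro b _ hb; simp [hb.symm]
  · simp
  · intro b _ hb
    apply Finset.sum_eq_zero
    intro c _
    simp [hb.symm]
  · simp

lemma ofMatrix_eq_zero (M : Matrix (Fin n) (Fin n) ℝ) {A B : Finset (Fin n)}
    (h : ¬ (A.card = 1 ∧ B.card = 1)) : ofMatrix M A B = 0 := by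
  rw [ofMatrix]
  apply Finset.sum_eq_zero; intro i _
  apply Finset.sum_eq_zero; intro j _
  have : ¬ (A = {i} ∧ B = {j}) := by
    rintro ⟨rfl, rfl⟩; exact h ⟨rfl, rfl⟩
  simp [this]

lemma gMetric_eq_ofMatrix : gMetric n = ofMatrix (1 : Matrix (Fin n) (Fin n) ℝ) := by
  funext I J
  by_cases hc : I.card = 1 ∧ J.card = 1
  · obtain ⟨i, rfl⟩ := Finset.card_eq_one.1 hc.1
    obtain ⟨j, rfl⟩ := Finset.card_eq_one.1 hc.2
    rw [ofMatrix_singleton, Matrix.one_apply, gMetric]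
    by_cases hij : i = j
    · subst hij; simp
    · simp [hij, (Finset.singleton_injective (α := Fin n)).ne_iff.2 hij]
  · rw [ofMatrix_eq_zero _ hc, gMetric]
    rw [if_neg]
    rintro ⟨rfl, h1⟩
    exact hc ⟨h1, h1⟩

/-- Determinant of the submatrix of `M` with rows `I` and columns `J` (in increasing order),
or `0` if the cardinalities do not match `k`. -/
def subdetk (M : Matrix (Fin n) (Fin n) ℝ) (k : ℕ) (I J : Finset (Fin n)) : ℝ :=
  if hI : I.card = k then
    if hJ : J.card = k then
      (Matrix.of fun a b : Fin k => M (I.orderEmbOfFin hI a) (J.orderEmbOfFin hJ b)).det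
    else 0
  else 0

lemma subdetk_of_cards (M : Matrix (Fin n) (Fin n) ℝ) {k : ℕ} {I J : Finset (Fin n)}
    (hI : I.card = k) (hJ : J.card = k) :
    subdetk M k I J =
      (Matrix.of fun a b : Fin k => M (I.orderEmbOfFin hI a) (J.orderEmbOfFin hJ b)).det := by
  rw [subdetk, dif_pos hI, dif_pos hJ]

lemma card_filter_lt_orderEmbOfFin {k : ℕ} (J : Finset (Fin n)) (hJ : J.card = k) (b : Fin k) :
    (J.filter (· < J.orderEmbOfFin hJ b)).card = b := by
  have : J.filter (· < J.orderEmbOfFin hJ b) =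
      Finset.image (J.orderEmbOfFin hJ) (Finset.Iio b) := by
    ext x
    simp only [Finset.mem_filter, Finset.mem_image, Finset.mem_Iio]
    constructor
    · rintro ⟨hxJ, hlt⟩
      have : x ∈ Set.range (J.orderEmbOfFin hJ) := by
        rw [Finset.range_orderEmbOfFin]; exact hxJ
      obtain ⟨a, rfl⟩ := this
      exact ⟨a, (OrderEmbedding.lt_iff_lt _).1 hlt, rfl⟩
    · rintro ⟨a, hab, rfl⟩
      exact ⟨Finset.orderEmbOfFin_mem _ _ _, (OrderEmbedding.lt_iff_lt _).2 hab⟩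
  rw [this, Finset.card_image_of_injective _ (J.orderEmbOfFin hJ).injective, Fin.card_Iio]

lemma orderEmbOfFin_erase {k : ℕ} (I : Finset (Fin n)) (hI : I.card = k + 1) (r : Fin (k + 1))
    (h' : (I.erase (I.orderEmbOfFin hI r)).card = k) (a : Fin k) :
    (I.erase (I.orderEmbOfFin hI r)).orderEmbOfFin h' a = I.orderEmbOfFin hI (r.succAbove a) := by
  have key : (fun a : Fin k => I.orderEmbOfFin hI (r.succAbove a)) =
      ⇑((I.erase (I.orderEmbOfFin hI r)).orderEmbOfFin h') := by
    apply Finset.orderEmbOfFin_unique h'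
    · intro x
      rw [Finset.mem_erase]
      refine ⟨?_, Finset.orderEmbOfFin_mem _ _ _⟩
      intro hEq
      exact r.succAbove_ne x ((I.orderEmbOfFin hI).injective hEq)
    · exact (I.orderEmbOfFin hI).strictMono.comp (Fin.strictMono_succAbove r)
  exact (congrFun key a).symm

/-- every element of `I` is in the range of its `orderEmbOfFin`. -/
lemma exists_orderEmbOfFin {k : ℕ} (I : Finset (Fin n)) (hI : I.card = k) {i : Fin n}
    (hi : i ∈ I) : ∃ a : Fin k, I.orderEmbOfFin hI a = i := by
  have : i ∈ Set.range (I.orderEmbOfFin hI) := by rw [Finset.range_orderEmbOfFin]; exact hi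
  exact this

lemma image_orderEmbOfFin {k : ℕ} (I : Finset (Fin n)) (hI : I.card = k) :
    Finset.image (I.orderEmbOfFin hI) Finset.univ = I := by
  ext x
  simp only [Finset.mem_image, Finset.mem_univ, true_and]
  constructor
  · rintro ⟨a, rfl⟩; exact Finset.orderEmbOfFin_mem _ _ _
  · intro hx; exact exists_orderEmbOfFin I hI hx

lemma sum_powerset_singleton (S : Finset (Fin n)) (f : Finset (Fin n) → ℝ)
    (hf : ∀ A ∈ S.powerset, A.card ≠ 1 → f A = 0) :
    ∑ A ∈ S.powerset, f A = ∑ i ∈ S, f {i} := by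
  have himg : S.powerset.filter (fun A => A.card = 1) = S.image (fun i => {i}) := by
    ext A
    simp only [Finset.mem_filter, Finset.mem_powerset, Finset.mem_image, Finset.card_eq_one]
    constructor
    · rintro ⟨hsub, i, rfl⟩; exact ⟨i, hsub (Finset.mem_singleton_self i), rfl⟩
    · rintro ⟨i, hi, rfl⟩; exact ⟨Finset.singleton_subset_iff.2 hi, i, rfl⟩
  rw [← Finset.sum_filter_of_ne (fun x hx hfx => by_contra fun hc => hfx (hf x hx hc)), himg,
    Finset.sum_image (fun x _ y _ h => Finset.singleton_injective h)]

lemma filter_lt_erase (I : Finset (Fin n)) (i : Fin n) :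
    (I.erase i).filter (· < i) = I.filter (· < i) := by
  rw [Finset.filter_erase, Finset.erase_eq_of_notMem]
  simp [lt_irrefl]

lemma dpow_ofMatrix (M : Matrix (Fin n) (Fin n) ℝ) (k : ℕ) :
    ∀ I J : Finset (Fin n),
      dpow (ofMatrix M) k I J = (k.factorial : ℝ) * subdetk M k I J := by
  induction k with
  | zero =>
    intro I J
    show (if I = ∅ ∧ J = ∅ then (1:ℝ) else 0) = _
    by_cases hIJ : I = ∅ ∧ J = ∅
    · obtain ⟨rfl, rfl⟩ := hIJ
      rw [if_pos ⟨rfl, rfl⟩, subdetk]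
      rw [dif_pos Finset.card_empty, dif_pos Finset.card_empty]
      simp [Matrix.det_fin_zero]
    · rw [if_neg hIJ, subdetk]
      rcases not_and_or.1 hIJ with h | h
      · rw [dif_neg (fun hc => h (Finset.card_eq_zero.1 hc))]; ring
      · by_cases hI0 : I.card = 0
        · rw [dif_pos hI0, dif_neg (fun hc => h (Finset.card_eq_zero.1 hc))]; ring
        · rw [dif_neg hI0]; ring
  | succ k ih =>
    intro I J
    rw [dpow, wedge]
    -- Step 1: restrict both sums to singletons
    have hstep1 : ∑ A ∈ I.powerset, ∑ B ∈ J.powerset,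
        shuffleSign A (I \ A) * shuffleSign B (J \ B) * ofMatrix M A B *
          dpow (ofMatrix M) k (I \ A) (J \ B) =
        ∑ i ∈ I, ∑ j ∈ J,
          shuffleSign {i} (I.erase i) * shuffleSign {j} (J.erase j) * M i j *
            dpow (ofMatrix M) k (I.erase i) (J.erase j) := by
      rw [sum_powerset_singleton]
      · refine Finset.sum_congr rfl fun i hi => ?_
        rw [sum_powerset_singleton]
        · refine Finset.sum_congr rfl fun j hj => ?_
          rw [Finset.sdiff_singleton_eq_erase, Finset.sdiff_singleton_eq_erase,
            ofMatrix_singleton]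
        · intro B _ hB
          rw [ofMatrix_eq_zero M (fun hc => hB hc.2)]
          ring
      · intro A _ hA
        apply Finset.sum_eq_zero
        intro B _
        rw [ofMatrix_eq_zero M (fun hc => hA hc.1)]
        ring
    rw [hstep1]
    by_cases hIJ : I.card = k + 1 ∧ J.card = k + 1
    · obtain ⟨hI, hJ⟩ := hIJ
      set mI := I.orderEmbOfFin hI with hmI
      set mJ := J.orderEmbOfFin hJ with hmJ
      set A : Matrix (Fin (k+1)) (Fin (k+1)) ℝ :=
        Matrix.of fun p q => M (mI p) (mJ q) with hA
      have hsumI : ∀ f : Fin n → ℝ, ∑ i ∈ I, f i = ∑ a : Fin (k+1), f (mI a) := by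
        intro f
        rw [← image_orderEmbOfFin I hI, Finset.sum_image (fun x _ y _ h => mI.injective h)]
      have hsumJ : ∀ f : Fin n → ℝ, ∑ j ∈ J, f j = ∑ b : Fin (k+1), f (mJ b) := by
        intro f
        rw [← image_orderEmbOfFin J hJ, Finset.sum_image (fun x _ y _ h => mJ.injective h)]
      rw [hsumI]
      simp only [hsumJ]
      have hcalc : ∀ a b : Fin (k+1),
          shuffleSign {mI a} (I.erase (mI a)) * shuffleSign {mJ b} (J.erase (mJ b)) *
            M (mI a) (mJ b) * dpow (ofMatrix M) k (I.erase (mI a)) (J.erase (mJ b)) =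
          (k.factorial : ℝ) * ((-1 : ℝ) ^ ((a : ℕ) + (b : ℕ)) * A a b *
            (A.submatrix a.succAbove b.succAbove).det) := by
        intro a b
        have hIa : (I.erase (mI a)).card = k := by
          rw [Finset.card_erase_of_mem (Finset.orderEmbOfFin_mem _ _ _), hI]
          omega
        have hJb : (J.erase (mJ b)).card = k := by
          rw [Finset.card_erase_of_mem (Finset.orderEmbOfFin_mem _ _ _), hJ]
          omega
        rw [ih, subdetk_of_cards M hIa hJb]
        have hsub : (Matrix.of fun a' b' : Fin k =>
            M ((I.erase (mI a)).orderEmbOfFin hIa a') ((J.erase (mJ b)).orderEmbOfFin hJb b'))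
            = A.submatrix a.succAbove b.succAbove := by
          ext a' b'
          rw [Matrix.of_apply, Matrix.submatrix_apply, hA, Matrix.of_apply,
            orderEmbOfFin_erase I hI a hIa a', orderEmbOfFin_erase J hJ b hJb b']
        rw [hsub]
        rw [shuffleSign_singleton, shuffleSign_singleton, filter_lt_erase, filter_lt_erase,
          card_filter_lt_orderEmbOfFin I hI a, card_filter_lt_orderEmbOfFin J hJ b, pow_add]
        simp only [hA, Matrix.of_apply]
        ring
      simp only [hcalc]
      have hrow : ∀ a : Fin (k+1),
          ∑ b : Fin (k+1), (k.factorial : ℝ) * ((-1 : ℝ) ^ ((a : ℕ) + (b : ℕ)) * A a b *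
            (A.submatrix a.succAbove b.succAbove).det) = (k.factorial : ℝ) * A.det := by
        intro a
        rw [← Finset.mul_sum, ← Matrix.det_succ_row A a]
      rw [Finset.sum_congr rfl (fun a _ => hrow a), Finset.sum_const, Finset.card_univ,
        Fintype.card_fin, subdetk_of_cards M hI hJ]
      push_cast [Nat.factorial_succ]
      rw [← hA]
      ring
    · -- degenerate case: everything vanishes
      have hz : ∀ i ∈ I, ∀ j ∈ J,
          dpow (ofMatrix M) k (I.erase i) (J.erase j) = 0 := by
        intro i hi j hj
        rw [ih, subdetk]
        rcases not_and_or.1 hIJ with h | h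
        · rw [dif_neg]
          · ring
          · intro hc
            exact h (by rw [← Finset.card_erase_add_one hi, hc])
        · by_cases hIc : (I.erase i).card = k
          · rw [dif_pos hIc, dif_neg]
            · ring
            · intro hc
              exact h (by rw [← Finset.card_erase_add_one hj, hc])
          · rw [dif_neg hIc]; ring
      have hzero : ∑ i ∈ I, ∑ j ∈ J,
          shuffleSign {i} (I.erase i) * shuffleSign {j} (J.erase j) * M i j *
            dpow (ofMatrix M) k (I.erase i) (J.erase j) = 0 :=
        Finset.sum_eq_zero fun i hi => Finset.sum_eq_zero fun j hj => by
          rw [hz i hi j hj]; ring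
      rw [hzero, subdetk]
      rcases not_and_or.1 hIJ with h | h
      · rw [dif_neg h]; ring
      · by_cases hIc : I.card = k + 1
        · rw [dif_pos hIc, dif_neg h]; ring
        · rw [dif_neg hIc]; ring

lemma subdetk_one {k : ℕ} (I J : Finset (Fin n)) :
    subdetk (1 : Matrix (Fin n) (Fin n) ℝ) k I J =
      if I.card = k ∧ I = J then 1 else 0 := by
  by_cases hI : I.card = k
  · by_cases hJ : J.card = k
    · rw [subdetk_of_cards 1 hI hJ]
      by_cases hEq : I = J
      · subst hEq
        rw [if_pos ⟨hI, rfl⟩]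
        have : (Matrix.of fun a b : Fin k =>
            (1 : Matrix (Fin n) (Fin n) ℝ) (I.orderEmbOfFin hI a) (I.orderEmbOfFin hJ b)) =
            (1 : Matrix (Fin k) (Fin k) ℝ) := by
          ext a b
          rw [Matrix.of_apply, Matrix.one_apply, Matrix.one_apply]
          congr 1
          simp [(I.orderEmbOfFin hI).injective.eq_iff]
        rw [this, Matrix.det_one]
      · rw [if_neg (fun hc => hEq hc.2)]
        have hne : (I \ J).Nonempty := by
          rw [Finset.sdiff_nonempty]
          intro hsub
          exact hEq (Finset.eq_of_subset_of_card_le hsub (by rw [hI, hJ]))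
        obtain ⟨i, hi⟩ := hne
        rw [Finset.mem_sdiff] at hi
        obtain ⟨a, ha⟩ := exists_orderEmbOfFin I hI hi.1
        apply Matrix.det_eq_zero_of_row_eq_zero a
        intro b
        have hnc : ¬ (I.orderEmbOfFin hI a = J.orderEmbOfFin hJ b) := by
          rw [ha]
          intro hc
          exact hi.2 (hc ▸ Finset.orderEmbOfFin_mem J hJ b)
        rw [Matrix.of_apply, Matrix.one_apply, if_neg hnc]
    · rw [subdetk, dif_pos hI, dif_neg hJ, if_neg]
      rintro ⟨h1, rfl⟩
      exact hJ h1
  · rw [subdetk, dif_neg hI, if_neg (fun hc => hI hc.1)]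

lemma dpow_gMetric (m : ℕ) (A B : Finset (Fin n)) :
    dpow (gMetric n) m A B =
      (m.factorial : ℝ) * (if A.card = m ∧ A = B then 1 else 0) := by
  rw [gMetric_eq_ofMatrix, dpow_ofMatrix, subdetk_one]

/-- The key evaluation: `(g^{n-k} h^k)(e_N, e_N) = k! (n-k)! ∑_{|T|=k} det M[T,T]`. -/
lemma wedge_eval (M : Matrix (Fin n) (Fin n) ℝ) (k : ℕ) (hk : k ≤ n) :
    wedge (dpow (gMetric n) (n - k)) (dpow (ofMatrix M) k) Finset.univ Finset.univ =
      (k.factorial : ℝ) * ((n - k).factorial : ℝ) *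
        ∑ T ∈ Finset.powersetCard k (Finset.univ : Finset (Fin n)), subdetk M k T T := by
  rw [wedge]
  have hterm : ∀ A ∈ (Finset.univ : Finset (Fin n)).powerset,
      ∑ B ∈ (Finset.univ : Finset (Fin n)).powerset,
        shuffleSign A (Finset.univ \ A) * shuffleSign B (Finset.univ \ B) *
          dpow (gMetric n) (n - k) A B * dpow (ofMatrix M) k (Finset.univ \ A) (Finset.univ \ B) =
      if A.card = n - k then
        ((n - k).factorial : ℝ) * (k.factorial : ℝ) * subdetk M k (Finset.univ \ A) (Finset.univ \ A)
      else 0 := by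
    intro A _
    rw [Finset.sum_eq_single A]
    · rw [dpow_gMetric, dpow_ofMatrix]
      by_cases hA : A.card = n - k
      · rw [if_pos hA, if_pos ⟨hA, rfl⟩]
        have := shuffleSign_mul_self A (Finset.univ \ A)
        linear_combination (((n - k).factorial : ℝ) * (k.factorial : ℝ) *
          subdetk M k (Finset.univ \ A) (Finset.univ \ A)) * this
      · rw [if_neg hA, if_neg (fun hc => hA hc.1)]
        ring
    · intro B _ hBA
      rw [dpow_gMetric]
      rw [if_neg (fun hc => hBA hc.2.symm)]
      ring
    · simp
  rw [Finset.sum_congr rfl hterm]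
  rw [Finset.sum_ite, Finset.sum_const_zero, add_zero]
  have hfilter : (Finset.univ : Finset (Fin n)).powerset.filter (fun A => A.card = n - k) =
      Finset.powersetCard (n - k) (Finset.univ : Finset (Fin n)) := by
    ext A; simp [Finset.mem_powersetCard, Finset.mem_powerset]
  rw [hfilter]
  rw [← Finset.sum_image (g := fun T => Finset.univ \ T)
    (f := fun T => ((n - k).factorial : ℝ) * (k.factorial : ℝ) * subdetk M k T T) ?hinj]
  case hinj =>
    intro x _ y _ hxy
    have := congrArg (fun S => (Finset.univ : Finset (Fin n)) \ S) hxy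
    simpa [Finset.sdiff_sdiff_eq_self (Finset.subset_univ _)] using this
  have himg : Finset.image (fun T => Finset.univ \ T)
      (Finset.powersetCard (n - k) (Finset.univ : Finset (Fin n))) =
      Finset.powersetCard k (Finset.univ : Finset (Fin n)) := by
    ext T
    simp only [Finset.mem_image, Finset.mem_powersetCard]
    constructor
    · rintro ⟨S, ⟨-, hS⟩, rfl⟩
      refine ⟨Finset.subset_univ _, ?_⟩
      rw [Finset.card_univ_diff, hS, Fintype.card_fin]
      omega
    · rintro ⟨-, hT⟩
      refine ⟨Finset.univ \ T, ⟨Finset.subset_univ _, ?_⟩, by simp [Finset.sdiff_sdiff_eq_self (Finset.subset_univ _)]⟩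
      rw [Finset.card_univ_diff, hT, Fintype.card_fin]
  rw [himg, Finset.mul_sum]
  refine Finset.sum_congr rfl fun T _ => by ring

lemma sum_perm_fix_eq_subdetk (M : Matrix (Fin n) (Fin n) ℝ) (S : Finset (Fin n)) :
    ∑ σ : Equiv.Perm (Fin n), ((Equiv.Perm.sign σ : ℤ) : ℝ) *
      ((if ∀ i ∈ Finset.univ \ S, σ i = i then (1:ℝ) else 0) * ∏ i ∈ S, M (σ i) i)
    = subdetk M S.card S S := by
  classical
  set N : Matrix (Fin n) (Fin n) ℝ :=
    Matrix.of fun i j => if i ∈ S ∧ j ∈ S then M i j else if i = j then 1 else 0 with hN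
  have hprod : ∀ σ : Equiv.Perm (Fin n),
      ∏ i : Fin n, N (σ i) i =
      (if ∀ i ∈ Finset.univ \ S, σ i = i then (1:ℝ) else 0) * ∏ i ∈ S, M (σ i) i := by
    intro σ
    rw [← Finset.prod_sdiff (Finset.subset_univ S)]
    by_cases hfix : ∀ i ∈ Finset.univ \ S, σ i = i
    · rw [if_pos hfix, one_mul]
      have h2 : ∏ i ∈ Finset.univ \ S, N (σ i) i = 1 := by
        apply Finset.prod_eq_one
        intro i hi
        have hiS : i ∉ S := (Finset.mem_sdiff.1 hi).2
        have hfi : σ i = i := hfix i hi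
        simp [hN, hfi, hiS]
      have h3 : ∏ i ∈ S, N (σ i) i = ∏ i ∈ S, M (σ i) i := by
        apply Finset.prod_congr rfl
        intro i hiS
        have hσiS : σ i ∈ S := by
          by_contra hc
          have h1 : σ (σ i) = σ i := hfix (σ i) (Finset.mem_sdiff.2 ⟨Finset.mem_univ _, hc⟩)
          have h2 := σ.injective h1
          rw [h2] at hc
          exact hc hiS
        simp [hN, hσiS, hiS]
      rw [h2, h3, one_mul]
    · rw [if_neg hfix, zero_mul]
      push_neg at hfix
      obtain ⟨i, hi, hne⟩ := hfix
      have h0 : ∏ i ∈ Finset.univ \ S, N (σ i) i = 0 := by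
        apply Finset.prod_eq_zero hi
        have hiS : i ∉ S := (Finset.mem_sdiff.1 hi).2
        simp [hN, hiS, hne]
      rw [h0, zero_mul]
  have hdet : ∑ σ : Equiv.Perm (Fin n), ((Equiv.Perm.sign σ : ℤ) : ℝ) *
      ((if ∀ i ∈ Finset.univ \ S, σ i = i then (1:ℝ) else 0) * ∏ i ∈ S, M (σ i) i) = N.det := by
    rw [Matrix.det_apply']
    exact Finset.sum_congr rfl fun σ _ => by rw [hprod]
  rw [hdet]
  rw [← Matrix.det_submatrix_equiv_self (Equiv.sumCompl (fun x : Fin n => x ∈ S)) N]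
  have hblocks : N.submatrix (Equiv.sumCompl (fun x : Fin n => x ∈ S))
      (Equiv.sumCompl (fun x : Fin n => x ∈ S)) =
      Matrix.fromBlocks (Matrix.of fun (a b : {x : Fin n // x ∈ S}) => M a b) 0 0 1 := by
    ext i j
    rcases i with a | a <;> rcases j with b | b
    · simp [hN, Matrix.submatrix_apply, a.2, b.2]
    · have hne : ¬ ((a : Fin n) = (b : Fin n)) := fun hc => b.2 (hc ▸ a.2)
      simp [hN, Matrix.submatrix_apply, b.2, hne]
    · have hne : ¬ ((a : Fin n) = (b : Fin n)) := fun hc => a.2 (hc ▸ b.2)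
      simp [hN, Matrix.submatrix_apply, a.2, hne]
    · simp [hN, Matrix.submatrix_apply, a.2, Matrix.one_apply, Subtype.ext_iff]
  rw [hblocks, Matrix.det_fromBlocks_zero₂₁, Matrix.det_one, mul_one]
  rw [subdetk_of_cards M rfl rfl]
  rw [← Matrix.det_submatrix_equiv_self (S.orderIsoOfFin rfl).toEquiv
    (Matrix.of fun (a b : {x : Fin n // x ∈ S}) => M a b)]
  congr 1

lemma det_sub_smul_one (M : Matrix (Fin n) (Fin n) ℝ) (lam : ℝ) :
    (M - lam • 1).det = ∑ S ∈ (Finset.univ : Finset (Fin n)).powerset,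
      (-lam) ^ (n - S.card) * subdetk M S.card S S := by
  have hentry : ∀ (σ : Equiv.Perm (Fin n)) (i : Fin n),
      (M - lam • 1) (σ i) i = M (σ i) i + (-lam) * (if σ i = i then (1:ℝ) else 0) := by
    intro σ i
    rw [Matrix.sub_apply, Matrix.smul_apply, Matrix.one_apply]
    split_ifs <;> simp [smul_eq_mul] <;> ring
  rw [Matrix.det_apply']
  have h1 : ∀ σ : Equiv.Perm (Fin n),
      ∏ i : Fin n, (M - lam • 1) (σ i) i =
      ∑ t ∈ (Finset.univ : Finset (Fin n)).powerset,
        (∏ i ∈ t, M (σ i) i) * ((-lam) ^ (n - t.card) *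
          (if ∀ i ∈ Finset.univ \ t, σ i = i then (1:ℝ) else 0)) := by
    intro σ
    rw [Finset.prod_congr rfl (fun i _ => hentry σ i), Finset.prod_add]
    refine Finset.sum_congr rfl fun t ht => ?_
    rw [Finset.prod_mul_distrib, Finset.prod_const, Finset.prod_boole]
    have hcard : (Finset.univ \ t).card = n - t.card := by
      rw [Finset.card_sdiff_of_subset (Finset.subset_univ t), Finset.card_univ, Fintype.card_fin]
    rw [hcard]
    ring
  rw [Finset.sum_congr rfl (fun σ _ => by rw [h1])]
  simp only [Finset.mul_sum]
  rw [Finset.sum_comm]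
  refine Finset.sum_congr rfl fun t _ => ?_
  rw [← sum_perm_fix_eq_subdetk M t, Finset.mul_sum]
  refine Finset.sum_congr rfl fun σ _ => by push_cast; ring

/-- The sum of principal `k × k` minors. -/
def esum (M : Matrix (Fin n) (Fin n) ℝ) (k : ℕ) : ℝ :=
  ∑ T ∈ Finset.powersetCard k (Finset.univ : Finset (Fin n)), subdetk M k T T

lemma det_expand (M : Matrix (Fin n) (Fin n) ℝ) (lam : ℝ) :
    (M - lam • 1).det = ∑ k ∈ Finset.range (n + 1), (-lam) ^ (n - k) * esum M k := by
  rw [det_sub_smul_one]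
  have hcard : ((Finset.univ : Finset (Fin n))).card = n := by
    rw [Finset.card_univ, Fintype.card_fin]
  rw [Finset.sum_powerset, hcard]
  refine Finset.sum_congr rfl fun k _ => ?_
  rw [esum, Finset.mul_sum]
  refine Finset.sum_congr rfl fun T hT => ?_
  rw [(Finset.mem_powersetCard.1 hT).2]

lemma toScalar_eval (M : Matrix (Fin n) (Fin n) ℝ) {k : ℕ} (hk : k ≤ n) :
    toScalar (hstar (wedge (dpow (gMetric n) (n - k)) (dpow (ofMatrix M) k))) =
      (k.factorial : ℝ) * ((n - k).factorial : ℝ) * esum M k := by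
  rw [toScalar_hstar, wedge_eval M k hk, esum]

lemma charpoly_eval (M : Matrix (Fin n) (Fin n) ℝ) (lam : ℝ) :
    (Matrix.charpoly M).eval lam = (lam • 1 - M).det := by
  have h1 : (Matrix.charpoly M).eval lam =
      Polynomial.evalRingHom lam (Matrix.charmatrix M).det := rfl
  rw [h1, RingHom.map_det]
  congr 1
  ext i j
  simp [Matrix.charmatrix_apply, Matrix.diagonal_apply, Matrix.one_apply,
    Matrix.sub_apply, Matrix.smul_apply, apply_ite (Polynomial.eval lam)]

lemma charpoly_eq (M : Matrix (Fin n) (Fin n) ℝ) :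
    Matrix.charpoly M = ∑ d ∈ Finset.range (n + 1),
      Polynomial.C ((-1 : ℝ) ^ n * (-1 : ℝ) ^ d * esum M (n - d)) * Polynomial.X ^ d := by
  apply Polynomial.funext
  intro lam
  rw [charpoly_eval]
  have h3 : (lam • (1 : Matrix (Fin n) (Fin n) ℝ) - M).det = (-1 : ℝ)^n * (M - lam • 1).det := by
    rw [← neg_sub M (lam • 1), Matrix.det_neg, Fintype.card_fin]
  rw [h3, det_expand, Finset.mul_sum]
  rw [← Finset.sum_range_reflect (fun k => (-1 : ℝ)^n * ((-lam) ^ (n - k) * esum M k)) (n + 1)]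
  rw [Polynomial.eval_finset_sum]
  refine Finset.sum_congr rfl fun d hd => ?_
  have hdn : d ≤ n := Nat.lt_succ_iff.1 (Finset.mem_range.1 hd)
  have h4 : n + 1 - 1 - d = n - d := by omega
  have h5 : n - (n - d) = d := by omega
  rw [h4, h5]
  simp only [Polynomial.eval_mul, Polynomial.eval_C, Polynomial.eval_pow, Polynomial.eval_X]
  rw [neg_pow]
  ring

lemma sInv_eq_esum (M : Matrix (Fin n) (Fin n) ℝ) {k : ℕ} (hk : k ≤ n) :
    (-1 : ℝ) ^ k * (Matrix.charpoly M).coeff (n - k) = esum M k := by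
  rw [charpoly_eq, Polynomial.finset_sum_coeff]
  have hcoeff : ∀ d ∈ Finset.range (n + 1),
      (Polynomial.C ((-1 : ℝ) ^ n * (-1 : ℝ) ^ d * esum M (n - d)) *
        Polynomial.X ^ d).coeff (n - k) =
      if n - k = d then (-1 : ℝ) ^ n * (-1 : ℝ) ^ d * esum M (n - d) else 0 := by
    intro d _
    rw [Polynomial.coeff_C_mul, Polynomial.coeff_X_pow]
    split_ifs <;> ring
  rw [Finset.sum_congr rfl hcoeff, Finset.sum_ite_eq (Finset.range (n + 1)) (n - k)]
  rw [if_pos (Finset.mem_range.2 (by omega))]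
  have h5 : n - (n - k) = k := by omega
  rw [h5]
  have hsign : (-1 : ℝ) ^ k * ((-1 : ℝ) ^ n * (-1 : ℝ) ^ (n - k)) = 1 := by
    rw [← pow_add, ← pow_add]
    have : k + (n + (n - k)) = 2 * n := by omega
    rw [this, pow_mul]
    norm_num
  calc (-1 : ℝ) ^ k * ((-1 : ℝ) ^ n * (-1 : ℝ) ^ (n - k) * esum M k)
      = ((-1 : ℝ) ^ k * ((-1 : ℝ) ^ n * (-1 : ℝ) ^ (n - k))) * esum M k := by ring
    _ = esum M k := by rw [hsign, one_mul]

end DForm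


open DForm in
/-- `s_k(h) = (1/(k!(n-k)!)) * (g^{n-k} h^k)`, and equivalently the characteristic
polynomial expansion `det(h-λg) = ∑ (-1)^(n-i) ((1/(i!(n-i)!)) * (g^{n-i} h^i)) λ^(n-i)`. -/
theorem statement1 (n : ℕ) (h : Matrix (Fin n) (Fin n) ℝ) :
    (∀ k : ℕ, 1 ≤ k → k ≤ n →
      sInv h k = ((k.factorial * (n - k).factorial : ℕ) : ℝ)⁻¹ *
        toScalar (hstar (wedge (dpow (gMetric n) (n - k)) (dpow (ofMatrix h) k)))) ∧
    (∀ lam : ℝ, (h - lam • 1).det =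
      ∑ i ∈ Finset.range (n + 1), (-1 : ℝ) ^ (n - i) *
        (((i.factorial * (n - i).factorial : ℕ) : ℝ)⁻¹ *
          toScalar (hstar (wedge (dpow (gMetric n) (n - i)) (dpow (ofMatrix h) i)))) *
        lam ^ (n - i)) := by
  constructor
  · intro k hk1 hkn
    rw [show sInv h k = (-1:ℝ)^k * (Matrix.charpoly h).coeff (n-k) from rfl,
      sInv_eq_esum h hkn, toScalar_eval h hkn, Nat.cast_mul]
    have hk0 : (k.factorial : ℝ) ≠ 0 := Nat.cast_ne_zero.2 (Nat.factorial_ne_zero k)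
    have hn0 : ((n-k).factorial : ℝ) ≠ 0 := Nat.cast_ne_zero.2 (Nat.factorial_ne_zero _)
    field_simp
  · intro lam
    rw [det_expand h lam]
    refine Finset.sum_congr rfl fun i hi => ?_
    have hin : i ≤ n := Nat.lt_succ_iff.1 (Finset.mem_range.1 hi)
    rw [toScalar_eval h hin, Nat.cast_mul, neg_pow]
    have hk0 : (i.factorial : ℝ) ≠ 0 := Nat.cast_ne_zero.2 (Nat.factorial_ne_zero i)
    have hn0 : ((n-i).factorial : ℝ) ≠ 0 := Nat.cast_ne_zero.2 (Nat.factorial_ne_zero _)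
    field_simp
end
end
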